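/- arXiv:1410.6186 — 2 statements merged into one kernel-verified Lean document; each statement's English description precedes it below -/
import Mathlib

section
/- With f^{(A)} = Σ_{k : 2α_k < A} (1/α_k) a_k where a_k = (M_{2α_k}/M)(D_{M_{2α_k+1}} − D_{M_{2α_k}}), the Vilenkin–Fourier coefficients of the martingale f are f̂(j) = M_{2α_k}/(M·α_k) if j ∈ {M_{2α_k}, ..., M_{2α_k+1} − 1} for some k, and f̂(j) = 0 if j lies outside the union of these blocks. -/
noncomputable section
open MeasureTheory Finset Filter
open scoped ENNReal NNReal

/-- M_0 = 1, M_{k+1} = m_k M_k, where the Vilenkin generating sequence is k ↦ m k + 2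
(ensuring every term is at least 2). -/
def Mv (m : ℕ → ℕ) : ℕ → ℕ
  | 0 => 1
  | k + 1 => (m k + 2) * Mv m k

/-- k-th digit of n in the generalized number system. -/
def digit (m : ℕ → ℕ) (n k : ℕ) : ℕ := (n / Mv m k) % (m k + 2)

/-- The Vilenkin group: complete direct product of the cyclic groups Z_{m_k + 2}. -/
abbrev GV (m : ℕ → ℕ) : Type := ∀ k : ℕ, ZMod (m k + 2)

instance (n : ℕ) : TopologicalSpace (ZMod (n + 2)) := ⊥
instance (n : ℕ) : DiscreteTopology (ZMod (n + 2)) := ⟨rfl⟩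

instance (n : ℕ) : MeasurableSpace (ZMod (n + 2)) := ⊤
instance (n : ℕ) : BorelSpace (ZMod (n + 2)) := ⟨(borel_eq_top_of_discrete).symm⟩

/-- The normalized Haar measure on the Vilenkin group. -/
def haarG (m : ℕ → ℕ) : Measure (GV m) :=
  Measure.addHaarMeasure (⊤ : TopologicalSpace.PositiveCompacts (GV m))

/-- Generalized Rademacher function r_k(x) = exp(2πi x_k / m_k). -/
def rad (m : ℕ → ℕ) (k : ℕ) (x : GV m) : ℂ :=
  Complex.exp (2 * Real.pi * Complex.I * ((x k).val : ℂ) / ((m k + 2 : ℕ) : ℂ))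

/-- Vilenkin character ψ_n(x) = ∏_k r_k(x)^{n_k}. -/
def vilenkin (m : ℕ → ℕ) (n : ℕ) (x : GV m) : ℂ :=
  ∏ k ∈ Finset.range n, rad m k x ^ digit m n k

/-- Dirichlet kernel D_n = ∑_{k<n} ψ_k. -/
def DK (m : ℕ → ℕ) (n : ℕ) (x : GV m) : ℂ :=
  ∑ k ∈ Finset.range n, vilenkin m k x

/-- Fejér kernel K_n = (1/n) ∑_{j=1}^n D_j. -/
def FK (m : ℕ → ℕ) (n : ℕ) (x : GV m) : ℂ :=
  (n : ℂ)⁻¹ * ∑ j ∈ Finset.range n, DK m (j + 1) x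

/-- The interval I_n = {x : x_0 = ⋯ = x_{n-1} = 0}. -/
def Iset (m : ℕ → ℕ) (n : ℕ) : Set (GV m) := {x | ∀ k < n, x k = 0}

/-- q_A = M_{2A} + M_{2A-2} + ⋯ + M_2 + M_0. -/
def qA (m : ℕ → ℕ) (A : ℕ) : ℕ := ∑ j ∈ Finset.range (A + 1), Mv m (2 * j)

/-- Fourier coefficient with respect to the Vilenkin system. -/
def fhat (m : ℕ → ℕ) (f : GV m → ℂ) (k : ℕ) : ℂ :=
  ∫ x, f x * (starRingEnd ℂ) (vilenkin m k x) ∂ haarG m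

/-- Partial sums from a given sequence of Fourier coefficients. -/
def Sc (m : ℕ → ℕ) (c : ℕ → ℂ) (n : ℕ) (x : GV m) : ℂ :=
  ∑ v ∈ Finset.range n, c v * vilenkin m v x

/-- Fejér means from a given sequence of Fourier coefficients. -/
def σc (m : ℕ → ℕ) (c : ℕ → ℂ) (n : ℕ) (x : GV m) : ℂ :=
  (n : ℂ)⁻¹ * ∑ k ∈ Finset.range n, Sc m c k x

/-- Partial sum operator S_n f for integrable f. -/
def Spart (m : ℕ → ℕ) (f : GV m → ℂ) (n : ℕ) (x : GV m) : ℂ :=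
  Sc m (fhat m f) n x

/-- The filtration generated by the intervals I_n(x), i.e. by the first n coordinates. -/
def filtrationG (m : ℕ → ℕ) : Filtration ℕ (inferInstance : MeasurableSpace (GV m)) where
  seq n := MeasurableSpace.comap (fun x (k : Fin n) => x k) inferInstance
  mono' := by
    intro a b hab
    show MeasurableSpace.comap (fun (x : GV m) (k : Fin a) => x k) inferInstance ≤
      MeasurableSpace.comap (fun (x : GV m) (k : Fin b) => x k) inferInstance
    have : (fun (x : GV m) (k : Fin a) => x k) =
        (fun (y : ∀ k : Fin b, ZMod (m k + 2)) (k : Fin a) => y (Fin.castLE hab k)) ∘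
          (fun x (k : Fin b) => x k) := rfl
    rw [this, ← MeasurableSpace.comap_comp]
    exact MeasurableSpace.comap_mono
      ((measurable_pi_lambda _ fun k => measurable_pi_apply _).comap_le)
  le' := fun n => (measurable_pi_lambda _ fun k => measurable_pi_apply _).comap_le


/-- The atom a = (M_{2β}/M)(D_{M_{2β+1}} - D_{M_{2β}}). -/
def aAtom (m : ℕ → ℕ) (M : ℕ) (β : ℕ) (x : GV m) : ℂ :=
  ((Mv m (2 * β) : ℂ) / (M : ℂ)) * (DK m (Mv m (2 * β + 1)) x - DK m (Mv m (2 * β)) x)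

/-- The martingale f^{(A)} = ∑_{k : 2α_k < A} (1/α_k) a_k. -/
def fSeq (m : ℕ → ℕ) (M : ℕ) (α : ℕ → ℕ) (A : ℕ) (x : GV m) : ℂ :=
  ∑ k ∈ (Finset.range A).filter (fun k => 2 * α k < A), ((α k : ℂ))⁻¹ * aAtom m M (α k) x

-- The Fourier coefficients of the constructed martingale: M_{2α_k}/(M α_k) on the
-- block [M_{2α_k}, M_{2α_k+1}) and 0 outside all blocks.
open scoped Classical in
def coef (m : ℕ → ℕ) (M : ℕ) (α : ℕ → ℕ) (j : ℕ) : ℂ :=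
  if h : ∃ k, Mv m (2 * α k) ≤ j ∧ j < Mv m (2 * α k + 1) then
    (Mv m (2 * α h.choose) : ℂ) / ((M : ℂ) * (α h.choose : ℂ))
  else 0

/-! ### Auxiliary lemmas -/

section Aux
open Complex

lemma two_pow_le_Mv (m : ℕ → ℕ) (k : ℕ) : 2 ^ k ≤ Mv m k := by
  induction k with
  | zero => simp [Mv]
  | succ k ih =>
    calc 2 ^ (k+1) = 2 * 2 ^ k := by ring
    _ ≤ (m k + 2) * Mv m k := Nat.mul_le_mul (by omega) ih
    _ = Mv m (k+1) := rfl

lemma Mv_pos (m : ℕ → ℕ) (k : ℕ) : 0 < Mv m k :=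
  lt_of_lt_of_le (Nat.pow_pos (n := k) (by norm_num)) (two_pow_le_Mv m k)

lemma Mv_le_Mv (m : ℕ → ℕ) {a b : ℕ} (h : a ≤ b) : Mv m a ≤ Mv m b := by
  induction h with
  | refl => exact le_rfl
  | step h ih => exact ih.trans (Nat.le_mul_of_pos_left _ (by omega))

lemma digit_eq_zero_of_lt {m : ℕ → ℕ} {n k : ℕ} (h : n < Mv m k) : digit m n k = 0 := by
  simp [digit, Nat.div_eq_of_lt h]

lemma digit_eq_zero_of_le {m : ℕ → ℕ} {n k : ℕ} (h : n ≤ k) : digit m n k = 0 :=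
  digit_eq_zero_of_lt (lt_of_lt_of_le (lt_of_le_of_lt h (Nat.lt_two_pow_self (n := k))) (two_pow_le_Mv m k))

lemma digit_lt (m : ℕ → ℕ) (n k : ℕ) : digit m n k < m k + 2 := Nat.mod_lt _ (by omega)

lemma Mv_shift (m : ℕ → ℕ) (k : ℕ) : Mv m (k + 1) = (m 0 + 2) * Mv (fun i => m (i+1)) k := by
  induction k with
  | zero => simp [Mv]
  | succ k ih =>
    show (m (k+1) + 2) * Mv m (k+1) = (m 0 + 2) * ((m (k+1) + 2) * Mv (fun i => m (i+1)) k)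
    rw [ih]
    ring

lemma digit_shift (m : ℕ → ℕ) (n k : ℕ) :
    digit m n (k+1) = digit (fun i => m (i+1)) (n / (m 0 + 2)) k := by
  simp only [digit, Mv_shift, Nat.div_div_eq_div_mul]

lemma digit_ext_aux (N : ℕ) : ∀ (m : ℕ → ℕ) (v j : ℕ), v + j ≤ N →
    (∀ k, digit m v k = digit m j k) → v = j := by
  induction N with
  | zero => intro m v j h _; omega
  | succ N ih =>
    intro m v j hN h
    have h0 : v % (m 0 + 2) = j % (m 0 + 2) := by simpa [digit, Mv] using h 0
    have hdvj : v / (m 0 + 2) = j / (m 0 + 2) := by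
      by_cases hc : v < m 0 + 2 ∧ j < m 0 + 2
      · rw [Nat.div_eq_of_lt hc.1, Nat.div_eq_of_lt hc.2]
      · apply ih (fun i => m (i+1)) _ _ _
          (fun k => by rw [← digit_shift, ← digit_shift]; exact h (k+1))
        have d1 : v / (m 0 + 2) ≤ v := Nat.div_le_self _ _
        have d2 : j / (m 0 + 2) ≤ j := Nat.div_le_self _ _
        have d3 : m 0 + 2 ≤ v → v / (m 0 + 2) < v :=
          fun h' => Nat.div_lt_self (by omega) (by omega)
        have d4 : m 0 + 2 ≤ j → j / (m 0 + 2) < j :=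
          fun h' => Nat.div_lt_self (by omega) (by omega)
        omega
    have e1 := Nat.div_add_mod v (m 0 + 2)
    rw [hdvj] at e1
    have e2 := Nat.div_add_mod j (m 0 + 2)
    omega

lemma digit_ext {m : ℕ → ℕ} {v j : ℕ} (h : ∀ k, digit m v k = digit m j k) : v = j :=
  digit_ext_aux (v + j) m v j le_rfl h

lemma exp_congr_mod (q : ℕ) (hq : 0 < q) (a b : ℤ) (h : a ≡ b [ZMOD q]) :
    Complex.exp (2*Real.pi*Complex.I*(a:ℂ)/(q:ℂ)) = Complex.exp (2*Real.pi*Complex.I*(b:ℂ)/(q:ℂ)) := by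
  rw [Complex.exp_eq_exp_iff_exists_int]
  obtain ⟨t, ht⟩ := (Int.ModEq.dvd h.symm : (q:ℤ) ∣ a - b)
  refine ⟨t, ?_⟩
  have hq' : (q:ℂ) ≠ 0 := Nat.cast_ne_zero.mpr hq.ne'
  have ha : (a:ℂ) = (b:ℂ) + (q:ℂ)*(t:ℂ) := by
    have : (a : ℂ) - b = (q:ℂ) * t := by exact_mod_cast congrArg (Int.cast : ℤ → ℂ) ht
    linear_combination this
  rw [ha]
  field_simp

lemma exp_nat_mod (q : ℕ) (hq : 0 < q) (a : ℕ) :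
    Complex.exp (2*Real.pi*Complex.I*((a % q : ℕ):ℂ)/(q:ℂ))
      = Complex.exp (2*Real.pi*Complex.I*((a:ℕ):ℂ)/(q:ℂ)) := by
  have h : ((a : ℤ) % q) ≡ (a : ℤ) [ZMOD (q:ℕ)] := Int.emod_emod_of_dvd _ dvd_rfl
  have := exp_congr_mod q hq ((a:ℤ) % q) (a:ℤ) h
  push_cast at this ⊢
  convert this using 4 <;> push_cast <;> norm_cast

lemma rad_add (m : ℕ → ℕ) (k : ℕ) (x y : GV m) :
    rad m k (x + y) = rad m k x * rad m k y := by
  haveI : NeZero (m k + 2) := ⟨by omega⟩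
  rw [rad, rad, rad, ← Complex.exp_add]
  have hxy : (x + y) k = x k + y k := rfl
  rw [hxy, ZMod.val_add]
  rw [exp_nat_mod (m k + 2) (by omega) ((x k).val + (y k).val)]
  congr 1
  push_cast
  ring

lemma vilenkin_add (m : ℕ → ℕ) (n : ℕ) (x y : GV m) :
    vilenkin m n (x + y) = vilenkin m n x * vilenkin m n y := by
  unfold vilenkin
  rw [← Finset.prod_mul_distrib]
  exact Finset.prod_congr rfl fun k _ => by rw [rad_add, mul_pow]

lemma rad_eq (m : ℕ → ℕ) (k : ℕ) (x : GV m) :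
    rad m k x = Complex.exp (((2 * Real.pi * (x k).val / (m k + 2) : ℝ) : ℂ) * Complex.I) := by
  rw [rad]
  congr 1
  push_cast
  ring

lemma abs_rad (m : ℕ → ℕ) (k : ℕ) (x : GV m) : ‖rad m k x‖ = 1 := by
  rw [rad_eq]; exact Complex.norm_exp_ofReal_mul_I _

lemma abs_vilenkin (m : ℕ → ℕ) (n : ℕ) (x : GV m) : ‖vilenkin m n x‖ = 1 := by
  rw [vilenkin, norm_prod]
  exact Finset.prod_eq_one fun k _ => by rw [norm_pow, abs_rad, one_pow]

lemma vilenkin_mul_conj_self (m : ℕ → ℕ) (n : ℕ) (x : GV m) :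
    vilenkin m n x * (starRingEnd ℂ) (vilenkin m n x) = 1 := by
  rw [Complex.mul_conj, Complex.normSq_eq_norm_sq, abs_vilenkin]
  norm_num

lemma vilenkin_single (m : ℕ → ℕ) (n k0 : ℕ) :
    vilenkin m n (Pi.single k0 (1 : ZMod (m k0 + 2)))
      = Complex.exp (2*Real.pi*Complex.I*((digit m n k0 : ℕ):ℂ)/((m k0 + 2 : ℕ):ℂ)) := by
  haveI : NeZero (m k0 + 2) := ⟨by omega⟩
  haveI : Fact (1 < m k0 + 2) := ⟨by omega⟩
  unfold vilenkin
  by_cases h : k0 < n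
  · rw [Finset.prod_eq_single_of_mem k0 (Finset.mem_range.mpr h)
      (fun b _ hb => by
        rw [rad, Pi.single_eq_of_ne hb, ZMod.val_zero]
        norm_num)]
    rw [rad, Pi.single_eq_same, ZMod.val_one, ← Complex.exp_nat_mul]
    congr 1
    push_cast
    ring
  · rw [digit_eq_zero_of_le (le_of_not_gt h)]
    rw [Finset.prod_eq_one fun b hb => by
      have hb' : b ≠ k0 := by have := Finset.mem_range.mp hb; omega
      rw [rad, Pi.single_eq_of_ne hb', ZMod.val_zero]
      norm_num]
    norm_num

lemma continuous_vilenkin (m : ℕ → ℕ) (n : ℕ) : Continuous (vilenkin m n) := by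
  unfold vilenkin
  apply continuous_finset_prod
  intro k _
  exact Continuous.pow (Continuous.comp
    (g := fun z : ZMod (m k + 2) =>
      Complex.exp (2 * Real.pi * Complex.I * ((z.val : ℕ) : ℂ) / ((m k + 2 : ℕ) : ℂ)))
    continuous_of_discreteTopology (continuous_apply k)) _

lemma integrable_of_continuous {m : ℕ → ℕ} {f : GV m → ℂ} (hf : Continuous f) :
    Integrable f (haarG m) := by
  haveI : IsFiniteMeasure (haarG m) := by unfold haarG; infer_instance
  exact hf.integrable_of_hasCompactSupport (HasCompactSupport.of_compactSpace f)

lemma vilenkin_orthonormal (m : ℕ → ℕ) (v j : ℕ) :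
    (∫ x, vilenkin m v x * (starRingEnd ℂ) (vilenkin m j x) ∂ haarG m)
      = if v = j then 1 else 0 := by
  haveI : IsProbabilityMeasure (haarG m) := by
    constructor
    have := Measure.addHaarMeasure_self (K₀ := (⊤ : TopologicalSpace.PositiveCompacts (GV m)))
    simpa [haarG] using this
  by_cases hvj : v = j
  · subst hvj
    rw [if_pos rfl]
    have : (fun x => vilenkin m v x * (starRingEnd ℂ) (vilenkin m v x)) = fun _ => (1:ℂ) :=
      funext (vilenkin_mul_conj_self m v)
    rw [this, integral_const]
    simp
  · rw [if_neg hvj]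
    set χ : GV m → ℂ := fun x => vilenkin m v x * (starRingEnd ℂ) (vilenkin m j x) with hχ
    obtain ⟨k, hk⟩ : ∃ k, digit m v k ≠ digit m j k := by
      by_contra hcon
      push_neg at hcon
      exact hvj (digit_ext hcon)
    set g : GV m := Pi.single k (1 : ZMod (m k + 2)) with hg
    have hχadd : ∀ x y, χ (x + y) = χ x * χ y := by
      intro x y
      simp only [hχ, vilenkin_add, map_mul]
      ring
    have hq : (0:ℕ) < m k + 2 := by omega
    have hqC : ((m k + 2 : ℕ):ℂ) ≠ 0 := Nat.cast_ne_zero.mpr hq.ne'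
    have hχg : χ g ≠ 1 := by
      intro hcon
      rw [hχ] at hcon
      simp only [hg, vilenkin_single] at hcon
      rw [← Complex.exp_conj, ← Complex.exp_add] at hcon
      rw [Complex.exp_eq_one_iff] at hcon
      obtain ⟨t, ht⟩ := hcon
      have hpi : (2*Real.pi*Complex.I) ≠ 0 := by
        simp [Real.pi_ne_zero, Complex.I_ne_zero]
      have hD : ((digit m v k : ℤ) : ℂ) - ((digit m j k : ℤ) : ℂ) = (t:ℂ) * ((m k + 2:ℕ):ℂ) := by
        have hconj : (starRingEnd ℂ) (2*Real.pi*Complex.I*((digit m j k:ℕ):ℂ)/((m k + 2:ℕ):ℂ))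
            = -(2*Real.pi*Complex.I*((digit m j k:ℕ):ℂ)/((m k + 2:ℕ):ℂ)) := by
          simp [map_div₀, map_mul, Complex.conj_I, map_ofNat]
          ring
        rw [hconj] at ht
        have ht2 := congrArg (· * ((m k + 2 : ℕ):ℂ)) ht
        simp only [div_mul_cancel₀ _ hqC, add_mul, neg_div, neg_mul] at ht2
        push_cast at ht2 ⊢
        apply mul_left_cancel₀ hpi
        linear_combination ht2
      have hD' : (digit m v k : ℤ) - (digit m j k : ℤ) = t * (m k + 2 : ℕ) := by
        exact_mod_cast hD
      have h1 := digit_lt m v k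
      have h2 := digit_lt m j k
      have : ((m k + 2 : ℕ):ℤ) ∣ ((digit m v k : ℤ) - (digit m j k : ℤ)) := ⟨t, by linarith⟩
      have := Int.eq_zero_of_abs_lt_dvd this (by
        rw [abs_lt]
        constructor <;> push_cast <;> omega)
      omega
    haveI : (haarG m).IsAddRightInvariant := by unfold haarG; infer_instance
    have inv : ∫ x, χ x ∂haarG m = (∫ x, χ x ∂haarG m) * χ g := by
      conv_lhs => rw [← integral_add_right_eq_self χ g]
      simp_rw [hχadd]
      exact integral_mul_const _ _
    rcases mul_eq_zero.mp (show (∫ x, χ x ∂haarG m) * (1 - χ g) = 0 by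
        linear_combination inv) with h | h
    · exact h
    · exact absurd (by linear_combination -h) hχg

end Aux

lemma continuous_DK (m : ℕ → ℕ) (n : ℕ) : Continuous (DK m n) := by
  unfold DK
  exact continuous_finset_sum _ fun k _ => continuous_vilenkin m k

lemma continuous_aAtom (m : ℕ → ℕ) (M β : ℕ) : Continuous (aAtom m M β) := by
  unfold aAtom
  exact continuous_const.mul ((continuous_DK m _).sub (continuous_DK m _))

lemma DK_sub (m : ℕ → ℕ) {a b : ℕ} (h : a ≤ b) (x : GV m) :
    DK m b x - DK m a x = ∑ v ∈ Finset.Ico a b, vilenkin m v x := by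
  unfold DK
  exact (Finset.sum_Ico_eq_sub _ h).symm

lemma aAtom_integral (m : ℕ → ℕ) (M β j : ℕ) :
    (∫ x, aAtom m M β x * (starRingEnd ℂ) (vilenkin m j x) ∂ haarG m)
      = ((Mv m (2*β) : ℂ)/(M:ℂ)) *
          (if Mv m (2*β) ≤ j ∧ j < Mv m (2*β+1) then 1 else 0) := by
  have hab : Mv m (2*β) ≤ Mv m (2*β+1) := Mv_le_Mv m (Nat.le_succ _)
  have heq : (fun x => aAtom m M β x * (starRingEnd ℂ) (vilenkin m j x))
      = fun x => ((Mv m (2*β) : ℂ)/(M:ℂ)) * ∑ v ∈ Finset.Ico (Mv m (2*β)) (Mv m (2*β+1)),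
          vilenkin m v x * (starRingEnd ℂ) (vilenkin m j x) := by
    funext x
    rw [aAtom, DK_sub m hab, mul_assoc, Finset.sum_mul]
  rw [heq, MeasureTheory.integral_const_mul, MeasureTheory.integral_finset_sum]
  · simp_rw [vilenkin_orthonormal]
    rw [Finset.sum_ite_eq' _ j (fun _ => (1:ℂ))]
    congr 1
    simp [Finset.mem_Ico]
  · intro v _
    exact integrable_of_continuous
      ((continuous_vilenkin m v).mul ((RCLike.continuous_conj (K := ℂ)).comp (continuous_vilenkin m j)))
/-- The Vilenkin–Fourier coefficients of the martingale f: for every j, the limit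
lim_A ∫ f^{(A)} ψ̄_j dμ exists and equals M_{2α_k}/(M α_k) on the block
[M_{2α_k}, M_{2α_k+1}) and 0 outside all blocks. -/
theorem fourier_coefficients_of_f (m : ℕ → ℕ) (M : ℕ) (α : ℕ → ℕ)
    (hα : StrictMono α) (hα0 : 0 < α 0)
    (hM : ∀ k, m k + 2 ≤ M) (hM' : ∃ k, m k + 2 = M) (j : ℕ) :
    Filter.Tendsto
      (fun A => ∫ x, fSeq m M α A x * (starRingEnd ℂ) (vilenkin m j x) ∂ haarG m)
      Filter.atTop (nhds (coef m M α j)) := by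
  classical
  have hFeq : ∀ A, (∫ x, fSeq m M α A x * (starRingEnd ℂ) (vilenkin m j x) ∂ haarG m)
      = ∑ k ∈ (Finset.range A).filter (fun k => 2 * α k < A),
          ((α k : ℂ))⁻¹ * (((Mv m (2 * α k) : ℂ)/(M:ℂ)) *
            (if Mv m (2 * α k) ≤ j ∧ j < Mv m (2 * α k + 1) then 1 else 0)) := by
    intro A
    have hint : (fun x => fSeq m M α A x * (starRingEnd ℂ) (vilenkin m j x))
        = fun x => ∑ k ∈ (Finset.range A).filter (fun k => 2 * α k < A),
            ((α k : ℂ))⁻¹ * (aAtom m M (α k) x * (starRingEnd ℂ) (vilenkin m j x)) := by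
      funext x
      rw [fSeq, Finset.sum_mul]
      exact Finset.sum_congr rfl fun k _ => by ring
    rw [hint, MeasureTheory.integral_finset_sum]
    · exact Finset.sum_congr rfl fun k _ => by
        rw [MeasureTheory.integral_const_mul, aAtom_integral]
    · intro k _
      exact integrable_of_continuous (continuous_const.mul ((continuous_aAtom m M (α k)).mul
        ((RCLike.continuous_conj (K := ℂ)).comp (continuous_vilenkin m j))))
  by_cases hex : ∃ k, Mv m (2 * α k) ≤ j ∧ j < Mv m (2 * α k + 1)
  · obtain ⟨k0, hk0⟩ := hex
    have huniq : ∀ k, (Mv m (2 * α k) ≤ j ∧ j < Mv m (2 * α k + 1)) → k = k0 := by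
      intro k hk
      rcases lt_trichotomy k k0 with h | h | h
      · have h1 : α k < α k0 := hα h
        have h2 : 2 * α k + 1 ≤ 2 * α k0 := by omega
        have := Mv_le_Mv m h2
        omega
      · exact h
      · have h1 : α k0 < α k := hα h
        have h2 : 2 * α k0 + 1 ≤ 2 * α k := by omega
        have := Mv_le_Mv m h2
        omega
    have hαk0 : 0 < α k0 := lt_of_lt_of_le hα0 (hα.monotone (Nat.zero_le _))
    have hval : coef m M α j
        = ((α k0 : ℂ))⁻¹ * (((Mv m (2 * α k0) : ℂ)/(M:ℂ)) * 1) := by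
      rw [coef, dif_pos ⟨k0, hk0⟩]
      have hch : (⟨k0, hk0⟩ : ∃ k, Mv m (2 * α k) ≤ j ∧ j < Mv m (2 * α k + 1)).choose = k0 :=
        huniq _ (Exists.choose_spec (⟨k0, hk0⟩ : ∃ k, Mv m (2 * α k) ≤ j ∧ j < Mv m (2 * α k + 1)))
      rw [hch]
      ring
    refine Filter.Tendsto.congr' ?_ tendsto_const_nhds
    filter_upwards [Filter.eventually_ge_atTop (max (k0 + 1) (2 * α k0 + 1))] with A hA
    rw [hFeq A]
    have hk0mem : k0 ∈ (Finset.range A).filter (fun k => 2 * α k < A) := by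
      have h1 := le_of_max_le_left hA
      have h2 := le_of_max_le_right hA
      simp only [Finset.mem_filter, Finset.mem_range]
      omega
    rw [Finset.sum_eq_single_of_mem k0 hk0mem (fun b _ hbne => by
      rw [if_neg (fun hcon => hbne (huniq b hcon)), mul_zero, mul_zero])]
    rw [if_pos hk0, hval]
  · have hc0 : coef m M α j = 0 := by rw [coef, dif_neg hex]
    rw [hc0]
    refine Filter.Tendsto.congr' ?_ tendsto_const_nhds
    filter_upwards with A
    rw [hFeq A]
    exact (Finset.sum_eq_zero fun k _ => by
      rw [if_neg (fun h => hex ⟨k, h⟩), mul_zero, mul_zero]).symm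

end
end

section
/- Let {α_k} satisfy conditions (2)–(4) of the construction and let η, s be integers with ⌊α_k/2⌋ ≤ η ≤ α_k − 3 and η + 2 ≤ s ≤ α_k − 1. Then for x in the set I_{2α_k}^{η,s} = {x ∈ I_{2α_k} : x = (0,...,0, x_{2η} ≠ 0, 0, ..., 0, x_{2s} ≠ 0, x_{2s+1}, ..., x_{2α_k − 1}, ...)}, the Fejér mean of the constructed martingale satisfies |σ_{q_{α_k}} f(x)| ≥ M_{2s} M_{2η} / (8 M² α_k). -/
noncomputable section
open MeasureTheory Finset Filter
open scoped ENNReal NNReal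

namespace VAux

variable {m : ℕ → ℕ} {x : GV m}

lemma Mv_succ (k : ℕ) : Mv m (k+1) = (m k + 2) * Mv m k := rfl

lemma Mv_pos (k : ℕ) : 0 < Mv m k := by
  induction k with
  | zero => exact Nat.one_pos
  | succ n ih => exact Nat.mul_pos (by omega) ih

lemma two_mul_Mv_le (k : ℕ) : 2 * Mv m k ≤ Mv m (k+1) := by
  rw [Mv_succ]; exact Nat.mul_le_mul_right _ (by omega)

lemma pow_mul_Mv_le (a d : ℕ) : 2 ^ d * Mv m a ≤ Mv m (a + d) := by
  induction d with
  | zero => simp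
  | succ n ih =>
      calc 2 ^ (n+1) * Mv m a = 2 * (2 ^ n * Mv m a) := by ring
      _ ≤ 2 * Mv m (a + n) := by omega
      _ ≤ Mv m (a + n + 1) := two_mul_Mv_le _

lemma Mv_le_Mv {a b : ℕ} (h : a ≤ b) : Mv m a ≤ Mv m b := by
  have := pow_mul_Mv_le (m := m) a (b - a)
  have h2 : 1 ≤ 2 ^ (b - a) := Nat.one_le_two_pow
  have : Mv m a ≤ Mv m (a + (b - a)) := le_trans (by nlinarith [Mv_pos (m := m) a]) this
  rwa [Nat.add_sub_cancel' h] at this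

lemma pow_mul_Mv_le' {a b : ℕ} (h : a ≤ b) : 2 ^ (b - a) * Mv m a ≤ Mv m b := by
  have := pow_mul_Mv_le (m := m) a (b - a)
  rwa [Nat.add_sub_cancel' h] at this

lemma two_pow_le_Mv (k : ℕ) : 2 ^ k ≤ Mv m k := by
  have := pow_mul_Mv_le (m := m) 0 k
  simpa [Mv] using this

lemma Mv_lt_Mv {a b : ℕ} (h : a < b) : Mv m a < Mv m b := by
  have h2 := pow_mul_Mv_le' (m := m) h.le
  have : 2 ≤ 2 ^ (b - a) := by
    have : 1 ≤ b - a := by omega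
    calc 2 = 2 ^ 1 := rfl
    _ ≤ 2 ^ (b - a) := Nat.pow_le_pow_right (by omega) this
  nlinarith [Mv_pos (m := m) a]

lemma Mv_dvd {a b : ℕ} (h : a ≤ b) : Mv m a ∣ Mv m b := by
  induction b with
  | zero => simpa [Nat.le_zero.mp h]
  | succ n ih =>
      rcases Nat.lt_or_ge a (n+1) with h' | h'
      · exact (ih (by omega)).mul_left _
      · have : a = n + 1 := by omega
        simp [this]

lemma digit_eq_zero_of_lt {n k : ℕ} (h : n < Mv m k) : digit m n k = 0 := by
  unfold digit
  rw [Nat.div_eq_of_lt h]; rfl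

lemma digit_eq_zero_of_le {n k : ℕ} (h : n ≤ k) : digit m n k = 0 := by
  refine digit_eq_zero_of_lt (lt_of_le_of_lt ?_ (Nat.lt_of_lt_of_le (Nat.lt_two_pow_self (n := k)) (two_pow_le_Mv k)))
  exact h

lemma prod_ext (x : GV m) (n : ℕ) {C D : ℕ} (hCD : C ≤ D)
    (hd : ∀ k, C ≤ k → digit m n k = 0) :
    ∏ k ∈ range C, rad m k x ^ digit m n k = ∏ k ∈ range D, rad m k x ^ digit m n k := by
  apply prod_subset (range_subset_range.mpr hCD)
  intro k _ hk'
  rw [hd k (by simpa using hk'), pow_zero]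

lemma vilenkin_eq_prod {n B : ℕ} (x : GV m) (hB : ∀ k, B ≤ k → digit m n k = 0) :
    vilenkin m n x = ∏ k ∈ range B, rad m k x ^ digit m n k := by
  unfold vilenkin
  rw [prod_ext x n (le_max_left n B) (fun k hk => digit_eq_zero_of_le hk),
    prod_ext x n (le_max_right n B) hB]

lemma vilenkin_eq_prod' {n B : ℕ} (x : GV m) (h : n < Mv m B) :
    vilenkin m n x = ∏ k ∈ range B, rad m k x ^ digit m n k :=
  vilenkin_eq_prod x (fun k hk => digit_eq_zero_of_lt (lt_of_lt_of_le h (Mv_le_Mv hk)))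




lemma rad_eq (k : ℕ) : rad m k x
    = Complex.exp (((2 * Real.pi * ((x k).val : ℝ) / ((m k + 2 : ℕ) : ℝ) : ℝ) : ℂ)
        * Complex.I) := by
  unfold rad
  congr 1
  have hne : ((m k : ℂ) + 2) ≠ 0 := by
    have h0 : ((m k + 2 : ℕ) : ℂ) ≠ 0 := Nat.cast_ne_zero.mpr (by omega)
    push_cast at h0; exact h0
  push_cast
  field_simp

lemma norm_rad (k : ℕ) : ‖rad m k x‖ = 1 := by
  rw [rad_eq, Complex.norm_exp, Complex.mul_I_re, Complex.ofReal_im,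
    neg_zero, Real.exp_zero]

lemma rad_pow (k : ℕ) : rad m k x ^ (m k + 2) = 1 := by
  unfold rad
  rw [← Complex.exp_nat_mul]
  have hne : ((m k : ℂ) + 2) ≠ 0 := by
    have h0 : ((m k + 2 : ℕ) : ℂ) ≠ 0 := Nat.cast_ne_zero.mpr (by omega)
    push_cast at h0; exact h0
  have key : ((m k + 2 : ℕ) : ℂ)
        * (2 * Real.pi * Complex.I * ((x k).val : ℂ) / ((m k + 2 : ℕ) : ℂ))
      = (((x k).val : ℤ) : ℂ) * (2 * Real.pi * Complex.I) := by
    push_cast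
    field_simp
  rw [key, Complex.exp_int_mul_two_pi_mul_I]

lemma rad_eq_one_of (k : ℕ) (h : x k = 0) : rad m k x = 1 := by
  unfold rad
  rw [h]
  simp

lemma rad_ne_one (k : ℕ) (h : x k ≠ 0) : rad m k x ≠ 1 := by
  haveI : NeZero (m k + 2) := ⟨by omega⟩
  set p : ℕ := m k + 2 with hp
  set v : ℕ := (x k).val with hv
  have hvp : v < p := ZMod.val_lt (x k)
  have hv0 : 0 < v := by
    rcases Nat.eq_zero_or_pos v with h0 | h0
    · exact absurd ((ZMod.val_eq_zero _).mp h0) h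
    · exact h0
  rw [rad_eq]
  intro hc
  rw [Complex.exp_eq_one_iff] at hc
  obtain ⟨n, hn⟩ := hc
  have h2 : ((2 * Real.pi * (v : ℝ) / (p : ℝ) : ℝ) : ℂ) = (n : ℂ) * (2 * (Real.pi : ℂ)) :=
    mul_right_cancel₀ Complex.I_ne_zero (by push_cast [hp] at hn ⊢; linear_combination hn)
  have h3 : (2 * Real.pi * (v : ℝ) / (p : ℝ)) = (n : ℝ) * (2 * Real.pi) := by
    exact_mod_cast h2
  have hppos : (0:ℝ) < (p : ℝ) := by positivity
  have hfrac : (v : ℝ) / (p : ℝ) = (n : ℝ) := by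
    have hpi := Real.pi_pos
    field_simp at h3 ⊢
    nlinarith [h3]
  have h0 : (0:ℝ) < (v : ℝ) / (p : ℝ) := div_pos (by exact_mod_cast hv0) hppos
  have h1 : (v : ℝ) / (p : ℝ) < 1 := by
    rw [div_lt_one hppos]; exact_mod_cast hvp
  rw [hfrac] at h0 h1
  have : (0:ℤ) < n := by exact_mod_cast h0
  have : n < 1 := by exact_mod_cast h1
  omega

lemma geom_rad_zero (k : ℕ) (h : x k ≠ 0) :
    ∑ a ∈ range (m k + 2), rad m k x ^ a = 0 := by
  have hmul := geom_sum_mul (rad m k x) (m k + 2)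
  rw [rad_pow, sub_self] at hmul
  rcases mul_eq_zero.mp hmul with h' | h'
  · exact h'
  · exact absurd (sub_eq_zero.mp h') (rad_ne_one k h)

lemma geom_rad_card (k : ℕ) (h : x k = 0) :
    ∑ a ∈ range (m k + 2), rad m k x ^ a = ((m k + 2 : ℕ) : ℂ) := by
  rw [show rad m k x = 1 from rad_eq_one_of k h]
  simp

lemma sum_mul_geom (r : ℂ) (p : ℕ) :
    (r - 1) * ∑ a ∈ range p, (a : ℂ) * r ^ a
      = ((p : ℂ) - 1) * r ^ p - (∑ a ∈ range p, r ^ a) + 1 := by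
  induction p with
  | zero => simp
  | succ n ih =>
      rw [sum_range_succ, sum_range_succ (f := fun a => r ^ a)]
      push_cast
      ring_nf
      ring_nf at ih
      linear_combination ih

lemma S1_eq (k : ℕ) (h : x k ≠ 0) :
    (rad m k x - 1) * ∑ a ∈ range (m k + 2), ((m k + 2 - 1 - a : ℕ) : ℂ) * rad m k x ^ a
      = -((m k + 2 : ℕ) : ℂ) := by
  set r := rad m k x with hr
  set p := m k + 2 with hp
  have hcast : ∀ a ∈ range p, ((p - 1 - a : ℕ) : ℂ) * r ^ a = ((p:ℂ) - 1 - a) * r ^ a := by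
    intro a ha
    simp only [mem_range] at ha
    congr 1
    have : (p - 1 - a : ℕ) = p - 1 - a := rfl
    push_cast [Nat.cast_sub (by omega : a ≤ p - 1), Nat.cast_sub (by omega : 1 ≤ p)]
    ring
  rw [sum_congr rfl hcast]
  have hsplit : ∑ a ∈ range p, ((p:ℂ) - 1 - a) * r ^ a
      = ((p:ℂ) - 1) * (∑ a ∈ range p, r ^ a) - ∑ a ∈ range p, (a:ℂ) * r ^ a := by
    rw [mul_sum, ← sum_sub_distrib]
    congr 1; ext a; ring
  rw [hsplit]
  have hg : ∑ a ∈ range p, r ^ a = 0 := geom_rad_zero k h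
  have hs := sum_mul_geom r p
  rw [hg] at hs ⊢
  have hrp : r ^ p = 1 := rad_pow k
  rw [hrp] at hs
  rw [mul_sub, mul_zero, hs]
  ring


def Fja (m : ℕ → ℕ) (N : ℕ) (x : GV m) : ℂ :=
  ∑ v ∈ Finset.range N, ((N - v : ℕ) : ℂ) * vilenkin m v x

lemma norm_vilenkin (n : ℕ) : ‖vilenkin m n x‖ = 1 := by
  unfold vilenkin
  rw [norm_prod]
  apply Finset.prod_eq_one
  intro k _
  rw [norm_pow, norm_rad, one_pow]

lemma norm_DK_le (n : ℕ) : ‖DK m n x‖ ≤ (n : ℝ) := by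
  calc ‖DK m n x‖ ≤ ∑ k ∈ range n, ‖vilenkin m k x‖ := norm_sum_le _ _
  _ = (n : ℝ) := by
      simp only [norm_vilenkin, sum_const, card_range, nsmul_eq_mul, mul_one]

lemma norm_Fja_le (N : ℕ) : ‖Fja m N x‖ ≤ (N : ℝ) * N := by
  calc ‖Fja m N x‖ ≤ ∑ v ∈ range N, ‖((N - v : ℕ) : ℂ) * vilenkin m v x‖ := norm_sum_le _ _
  _ ≤ ∑ v ∈ range N, (N : ℝ) := by
      apply Finset.sum_le_sum
      intro v _
      rw [norm_mul, norm_vilenkin, mul_one, Complex.norm_natCast]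
      exact_mod_cast Nat.sub_le N v
  _ = (N : ℝ) * N := by simp [mul_comm]

lemma digit_add {N a u : ℕ} (ha : a < m N + 2) (hu : u < Mv m N) (j : ℕ) :
    digit m (a * Mv m N + u) j
      = if j < N then digit m u j else if j = N then a else 0 := by
  rcases lt_trichotomy j N with hj | hj | hj
  · simp only [hj, if_pos]
    obtain ⟨c, hc⟩ := Mv_dvd (m := m) (by omega : j + 1 ≤ N)
    have hMj : Mv m (j+1) = (m j + 2) * Mv m j := rfl
    have hMvj : Mv m N = (m j + 2) * Mv m j * c := by rw [hc, hMj]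
    have hpos : 0 < Mv m j := Mv_pos j
    unfold digit
    rw [show a * Mv m N + u = u + (a * ((m j + 2) * c)) * Mv m j by rw [hMvj]; ring]
    rw [Nat.add_mul_div_right _ _ hpos]
    rw [show u / Mv m j + a * ((m j + 2) * c) = u / Mv m j + (a * c) * (m j + 2) by ring]
    rw [Nat.add_mul_mod_self_right]
  · subst hj
    rw [if_neg (lt_irrefl j), if_pos rfl]
    unfold digit
    rw [show a * Mv m j + u = u + a * Mv m j from by ring,
      Nat.add_mul_div_right _ _ (Mv_pos j), Nat.div_eq_of_lt hu, zero_add,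
      Nat.mod_eq_of_lt ha]
  · have hlt : a * Mv m N + u < Mv m j := by
      have h1 : a * Mv m N + u < (a + 1) * Mv m N := by nlinarith [Mv_pos (m := m) N]
      have h2 : (a + 1) * Mv m N ≤ (m N + 2) * Mv m N := Nat.mul_le_mul_right _ (by omega)
      have h3 : (m N + 2) * Mv m N = Mv m (N + 1) := rfl
      have h4 : Mv m (N+1) ≤ Mv m j := Mv_le_Mv (by omega)
      omega
    rw [digit_eq_zero_of_lt hlt]
    simp only [if_neg (by omega : ¬ j < N), if_neg (by omega : ¬ j = N)]

lemma vilenkin_split {N a u : ℕ} (x : GV m) (ha : a < m N + 2) (hu : u < Mv m N) :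
    vilenkin m (a * Mv m N + u) x = rad m N x ^ a * vilenkin m u x := by
  have hlt : a * Mv m N + u < Mv m (N + 1) := by
    have h1 : a * Mv m N + u < (a + 1) * Mv m N := by nlinarith [Mv_pos (m := m) N]
    have h2 : (a + 1) * Mv m N ≤ (m N + 2) * Mv m N := Nat.mul_le_mul_right _ (by omega)
    have h3 : (m N + 2) * Mv m N = Mv m (N + 1) := rfl
    omega
  rw [vilenkin_eq_prod' x hlt,
    vilenkin_eq_prod' (n := u) x (lt_of_lt_of_le hu (Mv_le_Mv (m := m) (Nat.le_succ N))),
    prod_range_succ, prod_range_succ]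
  have h1 : ∀ k ∈ range N, rad m k x ^ digit m (a * Mv m N + u) k = rad m k x ^ digit m u k := by
    intro k hk
    simp only [mem_range] at hk
    rw [digit_add ha hu k, if_pos hk]
  rw [prod_congr rfl h1, digit_add ha hu N, if_neg (lt_irrefl N), if_pos rfl,
    digit_eq_zero_of_lt hu, pow_zero, mul_one]
  exact mul_comm _ _

lemma sum_range_mul_split (f : ℕ → ℂ) (p M : ℕ) :
    ∑ v ∈ range (p * M), f v = ∑ a ∈ range p, ∑ u ∈ range M, f (a * M + u) := by
  induction p with
  | zero => simp
  | succ n ih =>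
      rw [show (n + 1) * M = n * M + M by ring, Finset.sum_range_add, ih, sum_range_succ]

lemma DK_add {N R : ℕ} (x : GV m) (hR : R ≤ Mv m N) :
    DK m (Mv m N + R) x = DK m (Mv m N) x + rad m N x * DK m R x := by
  unfold DK
  rw [Finset.sum_range_add, mul_sum]
  congr 1
  apply sum_congr rfl
  intro u hu
  simp only [mem_range] at hu
  rw [show Mv m N + u = 1 * Mv m N + u by ring, vilenkin_split x (by omega) (by omega), pow_one]

lemma Fja_add {N R : ℕ} (x : GV m) (hR : R ≤ Mv m N) :
    Fja m (Mv m N + R) x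
      = Fja m (Mv m N) x + (R : ℂ) * DK m (Mv m N) x + rad m N x * Fja m R x := by
  unfold Fja DK
  rw [Finset.sum_range_add]
  have h1 : ∀ v ∈ range (Mv m N), ((Mv m N + R - v : ℕ) : ℂ) * vilenkin m v x
      = ((Mv m N - v : ℕ) : ℂ) * vilenkin m v x + (R : ℂ) * vilenkin m v x := by
    intro v hv
    simp only [mem_range] at hv
    have : (Mv m N + R - v : ℕ) = (Mv m N - v) + R := by omega
    rw [this]
    push_cast
    ring
  rw [sum_congr rfl h1, sum_add_distrib, ← mul_sum]
  congr 1
  rw [mul_sum]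
  apply sum_congr rfl
  intro u hu
  simp only [mem_range] at hu
  rw [show (Mv m N + R - (Mv m N + u) : ℕ) = R - u by omega]
  rw [show Mv m N + u = 1 * Mv m N + u by ring, vilenkin_split x (by omega) (by omega), pow_one]
  ring

lemma Fja_Mv_succ (N : ℕ) (x : GV m) :
    Fja m (Mv m (N + 1)) x
      = (Mv m N : ℂ) * DK m (Mv m N) x
          * (∑ a ∈ range (m N + 2), ((m N + 2 - 1 - a : ℕ) : ℂ) * rad m N x ^ a)
        + (∑ a ∈ range (m N + 2), rad m N x ^ a) * Fja m (Mv m N) x := by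
  unfold Fja DK
  rw [show Mv m (N+1) = (m N + 2) * Mv m N from rfl]
  rw [sum_range_mul_split]
  have key : ∀ a ∈ range (m N + 2), ∑ u ∈ range (Mv m N),
        (((m N + 2) * Mv m N - (a * Mv m N + u) : ℕ) : ℂ) * vilenkin m (a * Mv m N + u) x
      = (((m N + 2 - 1 - a : ℕ) : ℂ) * rad m N x ^ a)
          * ((Mv m N : ℂ) * (∑ u ∈ range (Mv m N), vilenkin m u x))
        + rad m N x ^ a * (∑ u ∈ range (Mv m N), ((Mv m N - u : ℕ) : ℂ) * vilenkin m u x) := by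
    intro a ha
    simp only [mem_range] at ha
    have inner : ∀ u ∈ range (Mv m N),
        (((m N + 2) * Mv m N - (a * Mv m N + u) : ℕ) : ℂ) * vilenkin m (a * Mv m N + u) x
        = (((m N + 2 - 1 - a : ℕ) : ℂ) * rad m N x ^ a) * ((Mv m N : ℂ) * vilenkin m u x)
          + rad m N x ^ a * (((Mv m N - u : ℕ) : ℂ) * vilenkin m u x) := by
      intro u hu
      simp only [mem_range] at hu
      rw [vilenkin_split x ha hu]
      have hco : ((m N + 2) * Mv m N - (a * Mv m N + u) : ℕ)
          = (m N + 2 - 1 - a) * Mv m N + (Mv m N - u) := by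
        have h2 : (m N + 2) * Mv m N = a * Mv m N + (m N + 2 - a) * Mv m N := by
          rw [← Nat.add_mul]
          congr 1
          omega
        have h3 : (m N + 2 - a) * Mv m N = (m N + 2 - 1 - a) * Mv m N + Mv m N := by
          rw [show m N + 2 - a = (m N + 2 - 1 - a) + 1 by omega]
          ring
        omega
      rw [hco, Nat.cast_add, Nat.cast_mul]
      ring
    rw [sum_congr rfl inner, sum_add_distrib]
    simp only [← mul_sum]
  rw [sum_congr rfl key, sum_add_distrib, ← sum_mul, ← sum_mul]
  ring

lemma DK_Mv_succ (N : ℕ) (x : GV m) :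
    DK m (Mv m (N + 1)) x
      = (∑ a ∈ range (m N + 2), rad m N x ^ a) * DK m (Mv m N) x := by
  unfold DK
  rw [show Mv m (N+1) = (m N + 2) * Mv m N from rfl, sum_range_mul_split, sum_mul]
  apply sum_congr rfl
  intro a ha
  simp only [mem_range] at ha
  rw [mul_sum]
  apply sum_congr rfl
  intro u hu
  simp only [mem_range] at hu
  rw [vilenkin_split x ha hu]

lemma DK_Mv_zero {N : ℕ} (x : GV m) (h : ∃ k, k < N ∧ x k ≠ 0) :
    DK m (Mv m N) x = 0 := by
  induction N with
  | zero => obtain ⟨k, hk, _⟩ := h; omega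
  | succ n ih =>
      obtain ⟨k, hk, hxk⟩ := h
      rcases Nat.lt_or_ge k n with hkn | hkn
      · rw [DK_Mv_succ, ih ⟨k, hkn, hxk⟩, mul_zero]
      · have : k = n := by omega
        subst this
        rw [DK_Mv_succ, geom_rad_zero k hxk, zero_mul]

lemma DK_Mv_full {N : ℕ} (x : GV m) (h : ∀ k, k < N → x k = 0) :
    DK m (Mv m N) x = (Mv m N : ℂ) := by
  unfold DK
  have : ∀ v ∈ range (Mv m N), vilenkin m v x = 1 := by
    intro v hv
    simp only [mem_range] at hv
    rw [vilenkin_eq_prod' x hv]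
    apply prod_eq_one
    intro k hk
    simp only [mem_range] at hk
    rw [rad_eq_one_of k (h k hk), one_pow]
  rw [sum_congr rfl this]
  simp

lemma Fja_pred {N : ℕ} (x : GV m) (hN : 1 ≤ N) :
    Fja m (N - 1) x = Fja m N x - DK m N x := by
  obtain ⟨K, rfl⟩ : ∃ K, N = K + 1 := ⟨N - 1, by omega⟩
  simp only [Nat.add_sub_cancel]
  unfold Fja DK
  rw [sum_range_succ, sum_range_succ (f := fun v => vilenkin m v x)]
  have h1 : ∀ v ∈ range K, ((K + 1 - v : ℕ) : ℂ) * vilenkin m v x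
      = ((K - v : ℕ) : ℂ) * vilenkin m v x + vilenkin m v x := by
    intro v hv
    simp only [mem_range] at hv
    rw [show (K + 1 - v : ℕ) = (K - v) + 1 by omega]
    push_cast
    ring
  rw [sum_congr rfl h1, sum_add_distrib, show (K + 1 - K : ℕ) = 1 by omega]
  push_cast
  ring


def Ipat' (m : ℕ → ℕ) (k s : ℕ) (x : GV m) : Prop :=
  (∀ j < 2 * k, x j = 0) ∧ x (2 * k) ≠ 0 ∧
    (∀ j, 2 * k < j → j < 2 * s → x j = 0) ∧ x (2 * s) ≠ 0

lemma qA_zero : qA m 0 = 1 := by simp [qA, Mv]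

lemma qA_succ (j : ℕ) : qA m (j + 1) = Mv m (2 * (j + 1)) + qA m j := by
  rw [qA, qA, sum_range_succ, add_comm]

lemma three_qA_le (j : ℕ) : 3 * qA m j ≤ 4 * Mv m (2 * j) := by
  induction j with
  | zero => simp [qA_zero, Mv]
  | succ n ih =>
      have h4 : 4 * Mv m (2 * n) ≤ Mv m (2 * (n + 1)) := by
        have := pow_mul_Mv_le (m := m) (2 * n) 2
        have he : 2 * n + 2 = 2 * (n + 1) := by ring
        rw [he] at this
        simpa using this
      rw [qA_succ]
      omega

lemma Mv_le_qA (j : ℕ) : Mv m (2 * j) ≤ qA m j := by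
  apply Finset.single_le_sum (f := fun i => Mv m (2 * i)) (fun i _ => Nat.zero_le _)
  simp

lemma qA_mono {j j' : ℕ} (h : j ≤ j') : qA m j ≤ qA m j' := by
  apply Finset.sum_le_sum_of_subset
  exact range_subset_range.mpr (by omega)

lemma qA_pos (j : ℕ) : 0 < qA m j :=
  lt_of_lt_of_le (Mv_pos _) (Mv_le_qA j)

lemma qA_le_Mv_next (j : ℕ) : qA m j ≤ Mv m (2 * (j + 1)) := by
  have h1 := three_qA_le (m := m) j
  have h2 : 4 * Mv m (2 * j) ≤ Mv m (2 * (j + 1)) := by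
    have := pow_mul_Mv_le (m := m) (2 * j) 2
    have he : 2 * j + 2 = 2 * (j + 1) := by ring
    rw [he] at this
    simpa using this
  omega

section Ipat'Facts

variable {η s : ℕ} (hx : Ipat' m η s x)

lemma rsub_ne (hx : Ipat' m η s x) : rad m (2 * η) x - 1 ≠ 0 :=
  sub_ne_zero.mpr (rad_ne_one _ hx.2.1)

lemma G_form (hx : Ipat' m η s x) :
    ∀ n, 2 * η + 1 ≤ n → n ≤ 2 * s →
      Fja m (Mv m n) x
        = -((Mv m n : ℂ) * (Mv m (2 * η) : ℂ)) / (rad m (2 * η) x - 1) := by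
  intro n hn
  induction n, hn using Nat.le_induction with
  | base =>
      intro _
      have hS0 : ∑ a ∈ range (m (2 * η) + 2), rad m (2 * η) x ^ a = 0 :=
        geom_rad_zero _ hx.2.1
      have hDK : DK m (Mv m (2 * η)) x = (Mv m (2 * η) : ℂ) := DK_Mv_full x hx.1
      have hS1 := S1_eq (2 * η) hx.2.1
      have hrne := rsub_ne hx
      have hS1' : ∑ a ∈ range (m (2 * η) + 2), ((m (2 * η) + 2 - 1 - a : ℕ) : ℂ)
            * rad m (2 * η) x ^ a
          = -((m (2 * η) + 2 : ℕ) : ℂ) / (rad m (2 * η) x - 1) := by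
        rw [eq_div_iff hrne]
        linear_combination hS1
      rw [Fja_Mv_succ, hS0, hDK, hS1', zero_mul, add_zero, Mv_succ]
      push_cast
      field_simp
  | succ n hn ih =>
      intro hle
      have hform := ih (by omega)
      have hDK : DK m (Mv m n) x = 0 := DK_Mv_zero x ⟨2 * η, by omega, hx.2.1⟩
      have hS0 : ∑ a ∈ range (m n + 2), rad m n x ^ a = ((m n + 2 : ℕ) : ℂ) :=
        geom_rad_card _ (hx.2.2.1 n (by omega) (by omega))
      have hrne := rsub_ne hx
      rw [Fja_Mv_succ, hDK, hS0, hform, mul_zero, zero_mul, zero_add, Mv_succ,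
        mul_div_assoc']
      push_cast
      congr 1
      ring

lemma G_zero (hx : Ipat' m η s x) (hηs : η < s) :
    ∀ n, 2 * s + 1 ≤ n → Fja m (Mv m n) x = 0 := by
  intro n hn
  induction n, hn using Nat.le_induction with
  | base =>
      have hS0 : ∑ a ∈ range (m (2 * s) + 2), rad m (2 * s) x ^ a = 0 :=
        geom_rad_zero _ hx.2.2.2
      have hDK : DK m (Mv m (2 * s)) x = 0 := DK_Mv_zero x ⟨2 * η, by omega, hx.2.1⟩
      rw [Fja_Mv_succ, hDK, hS0, zero_mul, mul_zero, zero_mul, add_zero]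
  | succ n hn ih =>
      have hDK : DK m (Mv m n) x = 0 := DK_Mv_zero x ⟨2 * η, by omega, hx.2.1⟩
      rw [Fja_Mv_succ, hDK, ih, mul_zero, zero_mul, mul_zero, add_zero]

lemma FQ_rec (j : ℕ) :
    Fja m (qA m (j + 1)) x
      = Fja m (Mv m (2 * (j + 1))) x + (qA m j : ℂ) * DK m (Mv m (2 * (j + 1))) x
        + rad m (2 * (j + 1)) x * Fja m (qA m j) x := by
  rw [qA_succ]
  exact Fja_add x (qA_le_Mv_next j)

lemma DK_rec (j : ℕ) :
    DK m (qA m (j + 1)) x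
      = DK m (Mv m (2 * (j + 1))) x + rad m (2 * (j + 1)) x * DK m (qA m j) x := by
  rw [qA_succ]
  exact DK_add x (qA_le_Mv_next j)

lemma FQ_mid (hx : Ipat' m η s x) :
    ∀ j, η ≤ j → j + 1 ≤ s →
      Fja m (qA m j) x
        = -((Mv m (2 * η) : ℂ) * ((qA m j - qA m η : ℕ) : ℂ)) / (rad m (2 * η) x - 1)
          + Fja m (qA m η) x := by
  intro j hj
  induction j, hj using Nat.le_induction with
  | base => intro _; simp
  | succ j hj ih =>
      intro hle
      have hform := ih (by omega)
      have hDK : DK m (Mv m (2 * (j + 1))) x = 0 := DK_Mv_zero x ⟨2 * η, by omega, hx.2.1⟩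
      have hrad : rad m (2 * (j + 1)) x = 1 :=
        rad_eq_one_of _ (hx.2.2.1 (2 * (j + 1)) (by omega) (by omega))
      have hG : Fja m (Mv m (2 * (j + 1))) x
          = -((Mv m (2 * (j + 1)) : ℂ) * (Mv m (2 * η) : ℂ)) / (rad m (2 * η) x - 1) :=
        G_form hx _ (by omega) (by omega)
      have hmono : qA m η ≤ qA m j := qA_mono (by omega)
      have hsub : (qA m (j + 1) - qA m η : ℕ)
          = Mv m (2 * (j + 1)) + (qA m j - qA m η) := by
        have := qA_succ (m := m) j
        omega
      have hrne := rsub_ne hx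
      rw [FQ_rec, hDK, hG, hform, hrad, hsub, mul_zero, add_zero, one_mul]
      push_cast
      field_simp
      ring

end Ipat'Facts


lemma norm_add_lower (z w : ℂ) : ‖z‖ - ‖w‖ ≤ ‖z + w‖ := by
  have h2 : z = (z + w) - w := by ring
  have h : ‖z‖ ≤ ‖z + w‖ + ‖w‖ := by
    calc ‖z‖ = ‖(z + w) - w‖ := by rw [← h2]
    _ ≤ ‖z + w‖ + ‖w‖ := norm_sub_le _ _
  linarith

set_option maxHeartbeats 1000000 in
lemma kernel_bound {η s : ℕ} (hx : Ipat' m η s x) (hηs : η + 2 ≤ s)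
    {B : ℕ} (hsB : s ≤ B) :
    ((Mv m (2 * s) : ℝ) * (Mv m (2 * η) : ℝ)) / 8 ≤ ‖Fja m (qA m B - 1) x‖ := by
  set a : ℝ := (Mv m (2 * s) : ℝ) with ha
  set b : ℝ := (Mv m (2 * η) : ℝ) with hb
  have hb1 : (1 : ℝ) ≤ b := by
    rw [hb]; exact_mod_cast Mv_pos (m := m) (2 * η)
  have hab16 : 16 * b ≤ a := by
    have h := pow_mul_Mv_le' (m := m) (show 2 * η ≤ 2 * s by omega)
    have h16 : (16 : ℕ) ≤ 2 ^ (2 * s - 2 * η) := by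
      calc (16 : ℕ) = 2 ^ 4 := rfl
      _ ≤ 2 ^ (2 * s - 2 * η) := Nat.pow_le_pow_right (by omega) (by omega)
    have : 16 * Mv m (2 * η) ≤ Mv m (2 * s) := by
      calc 16 * Mv m (2 * η) ≤ 2 ^ (2 * s - 2 * η) * Mv m (2 * η) :=
            Nat.mul_le_mul_right _ h16
      _ ≤ Mv m (2 * s) := h
    rw [ha, hb]; exact_mod_cast this
  have h3d : 3 * qA m (s - 1) ≤ Mv m (2 * s) := by
    have h1 := three_qA_le (m := m) (s - 1)
    have h2 : 4 * Mv m (2 * (s - 1)) ≤ Mv m (2 * s) := by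
      have h := pow_mul_Mv_le' (m := m) (show 2 * (s - 1) ≤ 2 * s by omega)
      have h4 : (4 : ℕ) ≤ 2 ^ (2 * s - 2 * (s - 1)) := by
        calc (4 : ℕ) = 2 ^ 2 := rfl
        _ ≤ 2 ^ (2 * s - 2 * (s - 1)) := Nat.pow_le_pow_right (by omega) (by omega)
      calc 4 * Mv m (2 * (s - 1)) ≤ 2 ^ (2 * s - 2 * (s - 1)) * Mv m (2 * (s - 1)) :=
            Nat.mul_le_mul_right _ h4
      _ ≤ Mv m (2 * s) := h
    omega
  have h3qη : 3 * qA m η ≤ 4 * Mv m (2 * η) := three_qA_le η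
  set r : ℂ := rad m (2 * η) x with hrdef
  have hrne : r - 1 ≠ 0 := rsub_ne hx
  have hrpos : 0 < ‖r - 1‖ := norm_pos_iff.mpr hrne
  have hrnorm2 : ‖r - 1‖ ≤ 2 := by
    calc ‖r - 1‖ ≤ ‖r‖ + ‖(1 : ℂ)‖ := norm_sub_le _ _
    _ = 2 := by rw [hrdef, norm_rad, norm_one]; norm_num
  -- Step A : value of Fja at qA s
  set d : ℕ := qA m (s - 1) - qA m η with hd
  set ζ : ℂ := rad m (2 * s) x with hζ
  set E : ℂ := Fja m (qA m η) x with hE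
  have hs1 : s - 1 + 1 = s := by omega
  set X : ℂ := -((Mv m (2 * η) : ℂ) * ((Mv m (2 * s) : ℂ) + ζ * (d : ℂ))) / (r - 1) with hXdef
  have hFQs : Fja m (qA m s) x = X + ζ * E := by
    have hrec := FQ_rec (m := m) (x := x) (s - 1)
    rw [hs1] at hrec
    have hDK2s : DK m (Mv m (2 * s)) x = 0 := DK_Mv_zero x ⟨2 * η, by omega, hx.2.1⟩
    have hGs : Fja m (Mv m (2 * s)) x
        = -((Mv m (2 * s) : ℂ) * (Mv m (2 * η) : ℂ)) / (r - 1) :=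
      G_form hx _ (by omega) (by omega)
    have hmid : Fja m (qA m (s - 1)) x
        = -((Mv m (2 * η) : ℂ) * ((d : ℕ) : ℂ)) / (r - 1) + E :=
      FQ_mid hx (s - 1) (by omega) (by omega)
    rw [hrec, hDK2s, hGs, hmid, mul_zero, add_zero, hXdef]
    rw [← hζ]
    field_simp
    ring
  -- Step A' : norm lower bound at qA s
  have hnad : a - (d : ℝ) ≤ ‖(Mv m (2 * s) : ℂ) + ζ * (d : ℂ)‖ := by
    have h1 := norm_add_lower ((Mv m (2 * s) : ℂ)) (ζ * (d : ℂ))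
    have h2 : ‖ζ * (d : ℂ)‖ = (d : ℝ) := by
      rw [norm_mul, hζ, norm_rad, one_mul, Complex.norm_natCast]
    have h3 : ‖(Mv m (2 * s) : ℂ)‖ = a := by rw [Complex.norm_natCast]
    rw [h2, h3] at h1
    linarith
  have hdle : 3 * (d : ℝ) ≤ a := by
    have : 3 * d ≤ Mv m (2 * s) := by omega
    rw [ha]; exact_mod_cast this
  have hEnorm : ‖E‖ ≤ 2 * b ^ 2 := by
    have h1 : ‖E‖ ≤ (qA m η : ℝ) * (qA m η : ℝ) := norm_Fja_le _
    have h2 : (qA m η : ℝ) ≤ 4 * b / 3 := by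
      have : (3 * qA m η : ℝ) ≤ 4 * b := by rw [hb]; exact_mod_cast h3qη
      linarith
    have h0 : (0 : ℝ) ≤ (qA m η : ℝ) := Nat.cast_nonneg _
    nlinarith
  have hFQsnorm : 5 * a * b / 24 ≤ ‖Fja m (qA m s) x‖ := by
    have hsplit : ‖X‖ - ‖ζ * E‖ ≤ ‖Fja m (qA m s) x‖ := by
      rw [hFQs]; exact norm_add_lower _ _
    have hX : ‖X‖ = b * ‖(Mv m (2 * s) : ℂ) + ζ * (d : ℂ)‖ / ‖r - 1‖ := by
      rw [hXdef, norm_div, norm_neg, norm_mul, Complex.norm_natCast]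
    have hζE : ‖ζ * E‖ = ‖E‖ := by rw [norm_mul, hζ, norm_rad, one_mul]
    rw [hX, hζE] at hsplit
    have hnum : 2 * a / 3 ≤ ‖(Mv m (2 * s) : ℂ) + ζ * (d : ℂ)‖ := by nlinarith
    have hXlow : b * (2 * a / 3) / 2 ≤ b * ‖(Mv m (2 * s) : ℂ) + ζ * (d : ℂ)‖ / ‖r - 1‖ := by
      have hb0 : (0:ℝ) ≤ b := by linarith
      have ha0 : (0:ℝ) ≤ a := by linarith
      rw [div_le_div_iff₀ (by norm_num : (0:ℝ) < 2) hrpos]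
      have key1 : b * (2 * a / 3) * ‖r - 1‖ ≤ b * (2 * a / 3) * 2 :=
        mul_le_mul_of_nonneg_left hrnorm2 (by nlinarith)
      have key2 : b * (2 * a / 3) ≤ b * ‖(Mv m (2 * s) : ℂ) + ζ * (d : ℂ)‖ :=
        mul_le_mul_of_nonneg_left hnum hb0
      nlinarith
    have h2b : 2 * b ^ 2 ≤ a * b / 8 := by nlinarith
    linarith
  -- Step B : transport up to B
  have hstepB : ∀ j, s ≤ j → ‖Fja m (qA m j) x‖ = ‖Fja m (qA m s) x‖ := by
    intro j hj
    induction j, hj using Nat.le_induction with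
    | base => rfl
    | succ j hj ih =>
        have hG0 : Fja m (Mv m (2 * (j + 1))) x = 0 :=
          G_zero hx (by omega) _ (by omega)
        have hDK : DK m (Mv m (2 * (j + 1))) x = 0 :=
          DK_Mv_zero x ⟨2 * η, by omega, hx.2.1⟩
        rw [FQ_rec, hG0, hDK, mul_zero, add_zero, zero_add, norm_mul, norm_rad, one_mul, ih]
  -- Step C : DK bound
  have hDKB : ∀ j, η ≤ j → ‖DK m (qA m j) x‖ ≤ (qA m η : ℝ) := by
    intro j hj
    induction j, hj using Nat.le_induction with
    | base => exact norm_DK_le _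
    | succ j hj ih =>
        have hDK : DK m (Mv m (2 * (j + 1))) x = 0 :=
          DK_Mv_zero x ⟨2 * η, by omega, hx.2.1⟩
        rw [DK_rec, hDK, zero_add, norm_mul, norm_rad, one_mul]
        exact ih
  -- Step D : conclude
  have hpred : Fja m (qA m B - 1) x = Fja m (qA m B) x - DK m (qA m B) x :=
    Fja_pred x (qA_pos B)
  have hnormB : ‖Fja m (qA m B) x‖ = ‖Fja m (qA m s) x‖ := hstepB B hsB
  have hDKBn : ‖DK m (qA m B) x‖ ≤ (qA m η : ℝ) := hDKB B (by omega)
  have hqη : (qA m η : ℝ) ≤ 4 * b / 3 := by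
    have : (3 * qA m η : ℝ) ≤ 4 * b := by rw [hb]; exact_mod_cast h3qη
    linarith
  have hfinal : ‖Fja m (qA m B - 1) x‖
      ≥ ‖Fja m (qA m B) x‖ - ‖DK m (qA m B) x‖ := by
    rw [hpred]
    have := norm_sub_le (Fja m (qA m B) x) (DK m (qA m B) x)
    have h2 := norm_sub_norm_le (Fja m (qA m B) x) (DK m (qA m B) x)
    linarith
  rw [hnormB] at hfinal
  nlinarith

end VAux

/-- Membership in I_{2A}(0,…,0, x_{2k} ≠ 0, 0,…,0, x_{2s} ≠ 0, x_{2s+1}, …, x_{2A-1}):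
the first 2A coordinates vanish except that the 2k-th and 2s-th are nonzero and the
coordinates strictly between 2s and 2A are arbitrary. -/
def Ipat (m : ℕ → ℕ) (k s : ℕ) (x : GV m) : Prop :=
  (∀ j < 2 * k, x j = 0) ∧ x (2 * k) ≠ 0 ∧
    (∀ j, 2 * k < j → j < 2 * s → x j = 0) ∧ x (2 * s) ≠ 0


namespace VAux
variable {m : ℕ → ℕ} {x : GV m}

lemma sum_Sc (c : ℕ → ℂ) (q : ℕ) :
    ∑ n ∈ range q, Sc m c n x
      = ∑ v ∈ range q, ((q - 1 - v : ℕ) : ℂ) * (c v * vilenkin m v x) := by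
  induction q with
  | zero => simp
  | succ q ih =>
      rw [sum_range_succ, ih, sum_range_succ]
      have h1 : ∀ v ∈ range q, ((q + 1 - 1 - v : ℕ) : ℂ) * (c v * vilenkin m v x)
          = ((q - 1 - v : ℕ) : ℂ) * (c v * vilenkin m v x) + c v * vilenkin m v x := by
        intro v hv
        simp only [mem_range] at hv
        rw [show (q + 1 - 1 - v : ℕ) = (q - 1 - v) + 1 by omega]
        push_cast
        ring
      rw [sum_congr rfl h1, sum_add_distrib, show (q + 1 - 1 - q : ℕ) = 0 by omega]
      simp [Sc]

lemma coef_eval {α : ℕ → ℕ} {M : ℕ} (hα : StrictMono α) {t j : ℕ}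
    (h1 : Mv m (2 * α t) ≤ j) (h2 : j < Mv m (2 * α t + 1)) :
    coef m M α j = (Mv m (2 * α t) : ℂ) / ((M : ℂ) * (α t : ℂ)) := by
  have hex : ∃ u, Mv m (2 * α u) ≤ j ∧ j < Mv m (2 * α u + 1) := ⟨t, h1, h2⟩
  unfold coef
  rw [dif_pos hex]
  obtain ⟨h1', h2'⟩ := hex.choose_spec
  have heq : α hex.choose = α t := by
    rcases lt_trichotomy (α hex.choose) (α t) with hlt | he | hgt
    · have hle : Mv m (2 * α hex.choose + 1) ≤ Mv m (2 * α t) := Mv_le_Mv (by omega)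
      omega
    · exact he
    · have hle : Mv m (2 * α t + 1) ≤ Mv m (2 * α hex.choose) := Mv_le_Mv (by omega)
      omega
  rw [heq]

lemma coef_eq_zero {α : ℕ → ℕ} {M j : ℕ}
    (h : ¬ ∃ u, Mv m (2 * α u) ≤ j ∧ j < Mv m (2 * α u + 1)) :
    coef m M α j = 0 := by
  unfold coef
  rw [dif_neg h]

lemma coef_norm_le {α : ℕ → ℕ} {M : ℕ} (hα : StrictMono α)
    (k : ℕ) {v : ℕ} (hv : v < Mv m (2 * α k)) :
    ‖coef m M α v‖ ≤ ∑ j ∈ range k,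
      (if Mv m (2 * α j) ≤ v ∧ v < Mv m (2 * α j + 1)
        then (Mv m (2 * α j) : ℝ) / ((M : ℝ) * (α j : ℝ)) else 0) := by
  by_cases hex : ∃ u, Mv m (2 * α u) ≤ v ∧ v < Mv m (2 * α u + 1)
  · obtain ⟨t, ht1, ht2⟩ := hex
    have htk : t < k := by
      by_contra hge
      have hmono : α k ≤ α t := hα.monotone (by omega)
      have : Mv m (2 * α k) ≤ Mv m (2 * α t) := Mv_le_Mv (by omega)
      omega
    rw [coef_eval hα ht1 ht2]
    have hval : ‖(Mv m (2 * α t) : ℂ) / ((M : ℂ) * (α t : ℂ))‖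
        = (Mv m (2 * α t) : ℝ) / ((M : ℝ) * (α t : ℝ)) := by
      rw [norm_div, norm_mul, Complex.norm_natCast, Complex.norm_natCast,
        Complex.norm_natCast]
    rw [hval]
    have hft : (if Mv m (2 * α t) ≤ v ∧ v < Mv m (2 * α t + 1)
        then (Mv m (2 * α t) : ℝ) / ((M : ℝ) * (α t : ℝ)) else 0)
        = (Mv m (2 * α t) : ℝ) / ((M : ℝ) * (α t : ℝ)) := if_pos ⟨ht1, ht2⟩
    rw [← hft]
    have hnn : ∀ i ∈ range k, (0:ℝ) ≤ (if Mv m (2 * α i) ≤ v ∧ v < Mv m (2 * α i + 1)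
        then (Mv m (2 * α i) : ℝ) / ((M : ℝ) * (α i : ℝ)) else 0) := by
      intro i _
      split_ifs
      · positivity
      · exact le_refl 0
    exact Finset.single_le_sum hnn (mem_range.mpr htk)
  · rw [coef_eq_zero hex, norm_zero]
    apply sum_nonneg
    intro j _
    split_ifs
    · positivity
    · exact le_refl 0

lemma coef_sum_le {α : ℕ → ℕ} {M : ℕ} (hα : StrictMono α) (hα0 : 0 < α 0)
    (hM : ∀ i, m i + 2 ≤ M) (h2M : 2 ≤ M) (k : ℕ) :
    ∑ v ∈ range (Mv m (2 * α k)), ‖coef m M α v‖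
      ≤ ∑ j ∈ range k, (Mv m (2 * α j) : ℝ) ^ 2 / (α j : ℝ) := by
  have step1 : ∑ v ∈ range (Mv m (2 * α k)), ‖coef m M α v‖
      ≤ ∑ v ∈ range (Mv m (2 * α k)), ∑ j ∈ range k,
        (if Mv m (2 * α j) ≤ v ∧ v < Mv m (2 * α j + 1)
          then (Mv m (2 * α j) : ℝ) / ((M : ℝ) * (α j : ℝ)) else 0) := by
    apply sum_le_sum
    intro v hv
    exact coef_norm_le hα k (mem_range.mp hv)
  rw [Finset.sum_comm] at step1
  refine le_trans step1 (sum_le_sum ?_)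
  intro j _
  have hαj : 0 < α j := lt_of_lt_of_le hα0 (hα.monotone (Nat.zero_le j))
  have hcond : ∀ v, (Mv m (2 * α j) ≤ v ∧ v < Mv m (2 * α j + 1))
      ↔ v ∈ Finset.Ico (Mv m (2 * α j)) (Mv m (2 * α j + 1)) := by
    intro v; rw [Finset.mem_Ico]
  have hrw : ∑ v ∈ range (Mv m (2 * α k)),
      (if Mv m (2 * α j) ≤ v ∧ v < Mv m (2 * α j + 1)
        then (Mv m (2 * α j) : ℝ) / ((M : ℝ) * (α j : ℝ)) else 0)
      = ∑ v ∈ range (Mv m (2 * α k)) ∩ Finset.Ico (Mv m (2 * α j)) (Mv m (2 * α j + 1)),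
        (Mv m (2 * α j) : ℝ) / ((M : ℝ) * (α j : ℝ)) := by
    rw [Finset.sum_congr rfl (fun v _ => if_congr (hcond v) rfl rfl), Finset.sum_ite_mem]
  rw [hrw, Finset.sum_const, nsmul_eq_mul]
  have hcard : (range (Mv m (2 * α k)) ∩ Finset.Ico (Mv m (2 * α j)) (Mv m (2 * α j + 1))).card
      ≤ M * Mv m (2 * α j) := by
    calc _ ≤ (Finset.Ico (Mv m (2 * α j)) (Mv m (2 * α j + 1))).card :=
          Finset.card_le_card Finset.inter_subset_right
    _ = Mv m (2 * α j + 1) - Mv m (2 * α j) := Nat.card_Ico _ _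
    _ ≤ M * Mv m (2 * α j) := by
        have h1 : Mv m (2 * α j + 1) = (m (2 * α j) + 2) * Mv m (2 * α j) := rfl
        have h2 : (m (2 * α j) + 2) * Mv m (2 * α j) ≤ M * Mv m (2 * α j) :=
          Nat.mul_le_mul_right _ (hM _)
        omega
  have hcpos : (0:ℝ) ≤ (Mv m (2 * α j) : ℝ) / ((M : ℝ) * (α j : ℝ)) := by positivity
  calc ((range (Mv m (2 * α k)) ∩ Finset.Ico (Mv m (2 * α j)) (Mv m (2 * α j + 1))).card : ℝ)
        * ((Mv m (2 * α j) : ℝ) / ((M : ℝ) * (α j : ℝ)))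
      ≤ ((M * Mv m (2 * α j) : ℕ) : ℝ) * ((Mv m (2 * α j) : ℝ) / ((M : ℝ) * (α j : ℝ))) := by
        apply mul_le_mul_of_nonneg_right _ hcpos
        exact_mod_cast hcard
    _ = (Mv m (2 * α j) : ℝ) ^ 2 / (α j : ℝ) := by
        have hM0 : ((M : ℝ)) ≠ 0 := by positivity
        have hα0' : ((α j : ℝ)) ≠ 0 := by positivity
        push_cast
        field_simp

end VAux

set_option maxHeartbeats 4000000 in
/-- Pointwise lower bound for the Fejér mean σ_{q_{α_k}} f on the set I_{2α_k}^{η,s}. -/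
theorem fejer_mean_pointwise_lower_bound (m : ℕ → ℕ) (M : ℕ) (α : ℕ → ℕ)
    (hα : StrictMono α) (hα0 : 0 < α 0)
    (hM : ∀ k, m k + 2 ≤ M) (hM' : ∃ k, m k + 2 = M)
    (h2 : Summable fun k => ((α k : ℝ)) ^ (-(2 : ℝ)⁻¹))
    (h3 : ∀ k, 1 ≤ k →
      ∑ η ∈ Finset.range k, ((Mv m (2 * α η) : ℝ)) ^ 2 / (α η : ℝ) <
        ((Mv m (2 * α k) : ℝ)) ^ 2 / (α k : ℝ))
    (h4 : ∀ k, 1 ≤ k →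
      32 * (M : ℝ) * ((Mv m (2 * α (k - 1)) : ℝ)) ^ 2 / (α (k - 1) : ℝ) <
        (Mv m (α k) : ℝ) / (α k : ℝ))
    (k η s : ℕ) (hk : 1 ≤ k)
    (hη1 : α k / 2 ≤ η) (hη2 : η ≤ α k - 3) (hs1 : η + 2 ≤ s) (hs2 : s ≤ α k - 1)
    (x : GV m) (hx : Ipat m η s x) :
    ((Mv m (2 * s) : ℝ) * (Mv m (2 * η) : ℝ)) / (8 * (M : ℝ) ^ 2 * (α k : ℝ)) ≤
      ‖σc m (coef m M α) (qA m (α k)) x‖ := by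
  classical
  obtain ⟨k0, hk0⟩ := hM'
  have h2M : 2 ≤ M := by omega
  have hαk5 : 5 ≤ α k := by omega
  have hηge2 : 2 ≤ η := by omega
  have h2sge : α k + 1 ≤ 2 * s := by omega
  have hαpos : ∀ t, 0 < α t := fun t => lt_of_lt_of_le hα0 (hα.monotone (Nat.zero_le t))
  obtain ⟨k', rfl⟩ : ∃ k', k = k' + 1 := ⟨k - 1, by omega⟩
  have hx' : VAux.Ipat' m η s x := ⟨hx.1, hx.2.1, hx.2.2.1, hx.2.2.2⟩
  have hA1 : 1 ≤ α (k' + 1) := by omega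
  have hsplitq : qA m (α (k' + 1)) = Mv m (2 * α (k' + 1)) + qA m (α (k' + 1) - 1) := by
    have h := VAux.qA_succ (m := m) (α (k' + 1) - 1)
    rw [show α (k' + 1) - 1 + 1 = α (k' + 1) by omega] at h
    exact h
  have hQpM : qA m (α (k' + 1) - 1) ≤ Mv m (2 * α (k' + 1)) := by
    have h := VAux.qA_le_Mv_next (m := m) (α (k' + 1) - 1)
    rw [show α (k' + 1) - 1 + 1 = α (k' + 1) by omega] at h
    exact h
  have hQpos : 0 < qA m (α (k' + 1) - 1) := VAux.qA_pos _
  have hqpos : 0 < qA m (α (k' + 1)) := VAux.qA_pos _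
  have hq34 : 3 * qA m (α (k' + 1)) ≤ 4 * Mv m (2 * α (k' + 1)) := VAux.three_qA_le _
  -- rewrite the Fejér mean as a single weighted sum
  have hσnorm : ‖σc m (coef m M α) (qA m (α (k' + 1))) x‖
      = ‖∑ n ∈ range (qA m (α (k' + 1))), Sc m (coef m M α) n x‖
          / (qA m (α (k' + 1)) : ℝ) := by
    unfold σc
    rw [norm_mul, norm_inv, Complex.norm_natCast, inv_mul_eq_div]
  have hswap := VAux.sum_Sc (m := m) (x := x) (coef m M α) (qA m (α (k' + 1)))
  have hTsplit : (∑ v ∈ range (qA m (α (k' + 1))),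
        ((qA m (α (k' + 1)) - 1 - v : ℕ) : ℂ) * (coef m M α v * vilenkin m v x))
      = (∑ v ∈ range (Mv m (2 * α (k' + 1))),
          ((Mv m (2 * α (k' + 1)) + qA m (α (k' + 1) - 1) - 1 - v : ℕ) : ℂ)
            * (coef m M α v * vilenkin m v x))
        + (Mv m (2 * α (k' + 1)) : ℂ) / ((M : ℂ) * (α (k' + 1) : ℂ))
          * (rad m (2 * α (k' + 1)) x * VAux.Fja m (qA m (α (k' + 1) - 1) - 1) x) := by
    rw [show qA m (α (k' + 1)) = Mv m (2 * α (k' + 1)) + qA m (α (k' + 1) - 1) from hsplitq]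
    rw [Finset.sum_range_add]
    congr 1
    have hterm : ∀ u ∈ range (qA m (α (k' + 1) - 1)),
        ((Mv m (2 * α (k' + 1)) + qA m (α (k' + 1) - 1) - 1 - (Mv m (2 * α (k' + 1)) + u) : ℕ) : ℂ)
          * (coef m M α (Mv m (2 * α (k' + 1)) + u)
              * vilenkin m (Mv m (2 * α (k' + 1)) + u) x)
        = (Mv m (2 * α (k' + 1)) : ℂ) / ((M : ℂ) * (α (k' + 1) : ℂ))
            * (rad m (2 * α (k' + 1)) x
              * (((qA m (α (k' + 1) - 1) - 1 - u : ℕ) : ℂ) * vilenkin m u x)) := by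
      intro u hu
      simp only [mem_range] at hu
      have hcoef : coef m M α (Mv m (2 * α (k' + 1)) + u)
          = (Mv m (2 * α (k' + 1)) : ℂ) / ((M : ℂ) * (α (k' + 1) : ℂ)) := by
        apply VAux.coef_eval hα (t := k' + 1) (by omega)
        have h2 := VAux.two_mul_Mv_le (m := m) (2 * α (k' + 1))
        omega
      have hψ : vilenkin m (Mv m (2 * α (k' + 1)) + u) x
          = rad m (2 * α (k' + 1)) x * vilenkin m u x := by
        have h := VAux.vilenkin_split (m := m) (N := 2 * α (k' + 1)) (a := 1) (u := u) x
          (by omega) (by omega)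
        rw [pow_one] at h
        rw [show Mv m (2 * α (k' + 1)) + u = 1 * Mv m (2 * α (k' + 1)) + u by ring]
        exact h
      rw [hcoef, hψ, show (Mv m (2 * α (k' + 1)) + qA m (α (k' + 1) - 1) - 1
          - (Mv m (2 * α (k' + 1)) + u) : ℕ) = qA m (α (k' + 1) - 1) - 1 - u by omega]
      ring
    rw [sum_congr rfl hterm]
    simp only [← Finset.mul_sum]
    congr 2
    obtain ⟨P, hP⟩ : ∃ P, qA m (α (k' + 1) - 1) = P + 1 := ⟨qA m (α (k' + 1) - 1) - 1, by omega⟩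
    rw [hP, sum_range_succ, show (P + 1 - 1 - P : ℕ) = 0 by omega]
    simp only [Nat.cast_zero, zero_mul, add_zero, Nat.add_sub_cancel]
    unfold VAux.Fja
    rfl
  rw [hσnorm, hswap, hTsplit]
  -- bounds
  have hK := VAux.kernel_bound hx' hs1 (B := α (k' + 1) - 1) hs2
  have hB0 : ‖∑ v ∈ range (Mv m (2 * α (k' + 1))),
        ((Mv m (2 * α (k' + 1)) + qA m (α (k' + 1) - 1) - 1 - v : ℕ) : ℂ)
          * (coef m M α v * vilenkin m v x)‖
      ≤ (qA m (α (k' + 1)) : ℝ) * ∑ j ∈ range (k' + 1), (Mv m (2 * α j) : ℝ) ^ 2 / (α j : ℝ) := by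
    calc ‖∑ v ∈ range (Mv m (2 * α (k' + 1))),
          ((Mv m (2 * α (k' + 1)) + qA m (α (k' + 1) - 1) - 1 - v : ℕ) : ℂ)
            * (coef m M α v * vilenkin m v x)‖
        ≤ ∑ v ∈ range (Mv m (2 * α (k' + 1))),
            ‖((Mv m (2 * α (k' + 1)) + qA m (α (k' + 1) - 1) - 1 - v : ℕ) : ℂ)
              * (coef m M α v * vilenkin m v x)‖ := norm_sum_le _ _
      _ ≤ ∑ v ∈ range (Mv m (2 * α (k' + 1))), (qA m (α (k' + 1)) : ℝ) * ‖coef m M α v‖ := by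
          apply sum_le_sum
          intro v _
          rw [norm_mul, norm_mul, VAux.norm_vilenkin, mul_one, Complex.norm_natCast]
          apply mul_le_mul_of_nonneg_right _ (norm_nonneg _)
          have : (Mv m (2 * α (k' + 1)) + qA m (α (k' + 1) - 1) - 1 - v : ℕ)
              ≤ qA m (α (k' + 1)) := by omega
          exact_mod_cast this
      _ = (qA m (α (k' + 1)) : ℝ) * ∑ v ∈ range (Mv m (2 * α (k' + 1))), ‖coef m M α v‖ := by
          rw [Finset.mul_sum]
      _ ≤ _ := by
          apply mul_le_mul_of_nonneg_left _ (Nat.cast_nonneg _)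
          exact VAux.coef_sum_le hα hα0 hM h2M (k' + 1)
  -- abbreviations
  set a : ℝ := (Mv m (2 * s) : ℝ) with ha
  set b : ℝ := (Mv m (2 * η) : ℝ) with hb
  set MA : ℝ := (Mv m (2 * α (k' + 1)) : ℝ) with hMA
  set Mr : ℝ := (M : ℝ) with hMr
  set qr : ℝ := (qA m (α (k' + 1)) : ℝ) with hqr
  set αr : ℝ := (α (k' + 1) : ℝ) with hαr
  set S : ℝ := ∑ j ∈ range (k' + 1), (Mv m (2 * α j) : ℝ) ^ 2 / (α j : ℝ) with hS
  set K : ℝ := ‖VAux.Fja m (qA m (α (k' + 1) - 1) - 1) x‖ with hKdef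
  have hqrpos : (0 : ℝ) < qr := by rw [hqr]; exact_mod_cast hqpos
  have hαrpos : (0 : ℝ) < αr := by rw [hαr]; exact_mod_cast hαpos (k' + 1)
  have hMr2 : (2 : ℝ) ≤ Mr := by rw [hMr]; exact_mod_cast h2M
  have hb1 : (1 : ℝ) ≤ b := by rw [hb]; exact_mod_cast VAux.Mv_pos (m := m) (2 * η)
  have hapos : (0 : ℝ) < a := by rw [ha]; exact_mod_cast VAux.Mv_pos (m := m) (2 * s)
  have hq34' : 3 * qr ≤ 4 * MA := by rw [hqr, hMA]; exact_mod_cast hq34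
  -- bound on S
  have hX0 : (0 : ℝ) ≤ (Mv m (2 * α k') : ℝ) ^ 2 / (α k' : ℝ) := by positivity
  have hS2X : S ≤ 2 * ((Mv m (2 * α k') : ℝ) ^ 2 / (α k' : ℝ)) := by
    rw [hS, sum_range_succ]
    rcases Nat.eq_zero_or_pos k' with hk0' | hk0'
    · subst hk0'
      simp only [sum_range_zero, zero_add]
      linarith
    · have h3' := h3 k' hk0'
      linarith
  have h4' := h4 (k' + 1) (by omega)
  simp only [Nat.add_sub_cancel] at h4'
  have hS32 : 32 * Mr * αr * S ≤ a := by
    have h16 : 16 * Mr * S ≤ 32 * Mr * ((Mv m (2 * α k') : ℝ) ^ 2 / (α k' : ℝ)) := by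
      have := mul_le_mul_of_nonneg_left hS2X (show (0:ℝ) ≤ 16 * Mr by positivity)
      linarith
    have hXeq : 32 * Mr * ((Mv m (2 * α k') : ℝ) ^ 2 / (α k' : ℝ))
        = 32 * Mr * (Mv m (2 * α k') : ℝ) ^ 2 / (α k' : ℝ) := by ring
    have h4'' : 16 * Mr * S < (Mv m (α (k' + 1)) : ℝ) / αr := by
      rw [hMr]
      calc (16 : ℝ) * (M : ℝ) * S ≤ 32 * (M : ℝ) * ((Mv m (2 * α k') : ℝ) ^ 2 / (α k' : ℝ)) := by
            rw [← hMr]; exact h16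
        _ = 32 * (M : ℝ) * (Mv m (2 * α k') : ℝ) ^ 2 / (α k' : ℝ) := by ring
        _ < (Mv m (α (k' + 1)) : ℝ) / (α (k' + 1) : ℝ) := h4'
    have hmul : 16 * Mr * S * αr < (Mv m (α (k' + 1)) : ℝ) :=
      (lt_div_iff₀ hαrpos).mp h4''
    have h2Mv : 2 * Mv m (α (k' + 1)) ≤ Mv m (2 * s) := by
      have h := VAux.pow_mul_Mv_le' (m := m) (show α (k' + 1) ≤ 2 * s by omega)
      have h2 : (2 : ℕ) ≤ 2 ^ (2 * s - α (k' + 1)) := by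
        calc (2 : ℕ) = 2 ^ 1 := rfl
        _ ≤ 2 ^ (2 * s - α (k' + 1)) := Nat.pow_le_pow_right (by omega) (by omega)
      calc 2 * Mv m (α (k' + 1)) ≤ 2 ^ (2 * s - α (k' + 1)) * Mv m (α (k' + 1)) :=
            Nat.mul_le_mul_right _ h2
      _ ≤ Mv m (2 * s) := h
    have h2Mv' : 2 * (Mv m (α (k' + 1)) : ℝ) ≤ a := by
      rw [ha]; exact_mod_cast h2Mv
    nlinarith
  -- lower bound for the norm of the whole sum
  have hZnorm : ‖(Mv m (2 * α (k' + 1)) : ℂ) / ((M : ℂ) * (α (k' + 1) : ℂ))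
        * (rad m (2 * α (k' + 1)) x * VAux.Fja m (qA m (α (k' + 1) - 1) - 1) x)‖
      = MA / (Mr * αr) * K := by
    rw [norm_mul, norm_mul, VAux.norm_rad, one_mul, norm_div, norm_mul,
      Complex.norm_natCast, Complex.norm_natCast, Complex.norm_natCast, hMA, hMr, hαr, hKdef]
  have hTnorm : MA / (Mr * αr) * K - qr * S
      ≤ ‖(∑ v ∈ range (Mv m (2 * α (k' + 1))),
          ((Mv m (2 * α (k' + 1)) + qA m (α (k' + 1) - 1) - 1 - v : ℕ) : ℂ)
            * (coef m M α v * vilenkin m v x))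
        + (Mv m (2 * α (k' + 1)) : ℂ) / ((M : ℂ) * (α (k' + 1) : ℂ))
          * (rad m (2 * α (k' + 1)) x * VAux.Fja m (qA m (α (k' + 1) - 1) - 1) x)‖ := by
    rw [add_comm]
    have h1 := VAux.norm_add_lower
      ((Mv m (2 * α (k' + 1)) : ℂ) / ((M : ℂ) * (α (k' + 1) : ℂ))
        * (rad m (2 * α (k' + 1)) x * VAux.Fja m (qA m (α (k' + 1) - 1) - 1) x))
      (∑ v ∈ range (Mv m (2 * α (k' + 1))),
          ((Mv m (2 * α (k' + 1)) + qA m (α (k' + 1) - 1) - 1 - v : ℕ) : ℂ)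
            * (coef m M α v * vilenkin m v x))
    rw [hZnorm] at h1
    have hB0' := hB0
    linarith
  have hKb : a * b / 8 ≤ K := by
    rw [hKdef, ha, hb]
    exact hK
  -- final numeric computation
  rw [div_le_div_iff₀ (by positivity) hqrpos]
  have hKpos : (0 : ℝ) ≤ K := by rw [hKdef]; exact norm_nonneg _
  have hSpos : (0 : ℝ) ≤ S := by
    rw [hS]; apply sum_nonneg; intro j _; positivity
  calc a * b * qr ≤ (MA / (Mr * αr) * K - qr * S) * (8 * Mr ^ 2 * αr) := by
        have hMrne : Mr ≠ 0 := by linarith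
        have hαrne : αr ≠ 0 := by linarith
        have hexpand : (MA / (Mr * αr) * K - qr * S) * (8 * Mr ^ 2 * αr)
            = 8 * Mr * MA * K - 8 * Mr ^ 2 * αr * (qr * S) := by
          field_simp
        rw [hexpand]
        have hMA0 : (0 : ℝ) ≤ MA := by rw [hMA]; positivity
        have hKMA := mul_le_mul_of_nonneg_left hKb
          (show (0 : ℝ) ≤ 8 * Mr * MA by positivity)
        have hSq := mul_le_mul_of_nonneg_left hS32
          (show (0 : ℝ) ≤ Mr * qr / 4 by positivity)
        have hMAb := mul_le_mul_of_nonneg_right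
          (show (3 : ℝ) / 4 * qr ≤ MA by linarith)
          (show (0 : ℝ) ≤ Mr * (a * b) by positivity)
        have hfact : 0 ≤ a * qr * (3 * Mr * b - 4 * b - Mr) := by
          have h1 : (0 : ℝ) ≤ (b - 1) * (3 * Mr - 4) := by
            apply mul_nonneg <;> linarith
          have h2 : (0 : ℝ) ≤ a * qr := by positivity
          nlinarith
        nlinarith [hKMA, hSq, hMAb, hfact]
    _ ≤ _ := by
        apply mul_le_mul_of_nonneg_right hTnorm (by positivity)


end
end
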